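/- Let (f_i)_{i=1}^{n+1} be a Parseval frame of n+1 vectors for ℝⁿ. Then there exists a unique sequence of scalars (g_i)_{i=1}^{n+1} ∈ ℝ^{n+1} such that the sequence (f_i ⊕ g_i)_{i=1}^{n+1} is an orthonormal basis of ℝⁿ ⊕ ℝ = ℝ^{n+1} and the (n+1) × (n+1) matrix whose columns are the vectors f_i ⊕ g_i has determinant 1. Moreover, the only other scalar sequence making (f_i ⊕ g_i)_{i=1}^{n+1} an orthonormal basis is (-g_i)_{i=1}^{n+1}. -/

import Mathlib

open scoped RealInnerProductSpace

/-- For `f : Fin (n+1) → ℝⁿ` and scalars `g : Fin (n+1) → ℝ`, the family of vectors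
`f i ⊕ g i` in `ℝⁿ ⊕ ℝ ≅ ℝ^(n+1)`. -/
noncomputable def snocFamily {n : ℕ} (f : Fin (n + 1) → EuclideanSpace ℝ (Fin n))
    (g : Fin (n + 1) → ℝ) : Fin (n + 1) → EuclideanSpace ℝ (Fin (n + 1)) :=
  fun i => WithLp.toLp 2 (Fin.snoc (f i) (g i) : Fin (n + 1) → ℝ)

/-- A family of `k` vectors in `ℝᵏ` is an orthonormal basis. -/
def IsONBFamily {k : ℕ} (v : Fin k → EuclideanSpace ℝ (Fin k)) : Prop :=
  ∃ b : OrthonormalBasis (Fin k) ℝ (EuclideanSpace ℝ (Fin k)), ∀ i, b i = v i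

section Aux

open Matrix

variable {n : ℕ} (f : Fin (n + 1) → EuclideanSpace ℝ (Fin n))

private lemma euclid_inner {m : ℕ} (x y : EuclideanSpace ℝ (Fin m)) :
    ⟪x, y⟫ = ∑ i, x i * y i := by
  simp [PiLp.inner_apply, RCLike.inner_apply, mul_comm]

/-- Row Gram identity from the Parseval condition. -/
private lemma parseval_rows
    (hf : ∀ x : EuclideanSpace ℝ (Fin n), ∑ i, ⟪f i, x⟫ • f i = x) :
    ∀ j k : Fin n, ∑ i, f i j * f i k = if j = k then 1 else 0 := by
  intro j k
  have h := congrArg (fun v => v j) (hf (EuclideanSpace.single k 1))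
  have h2 : ∀ x : EuclideanSpace ℝ (Fin n), (∑ i, ⟪f i, x⟫ • f i) j = ∑ i, ⟪f i, x⟫ * f i j :=
    fun x => by simp [WithLp.ofLp_sum]
  rw [h2] at h
  simp only [PiLp.inner_apply, RCLike.inner_apply, conj_trivial,
    EuclideanSpace.single_apply, mul_ite, mul_one, mul_zero, ite_mul, one_mul, zero_mul,
    Finset.sum_ite_eq, Finset.sum_ite_eq', Finset.mem_univ, if_true] at h
  rw [← h]
  exact Finset.sum_congr rfl fun i _ => mul_comm _ _

/-- Existence of a unit vector orthogonal to all the "rows" of `f`. -/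
private lemma exists_unit_orth
    (hrow : ∀ j k : Fin n, ∑ i, f i j * f i k = if j = k then 1 else 0) :
    ∃ g : Fin (n + 1) → ℝ, (∀ k, ∑ i, f i k * g i = 0) ∧ ∑ i, g i * g i = 1 := by
  classical
  set r : Fin n → EuclideanSpace ℝ (Fin (n + 1)) := fun k => WithLp.toLp 2 (fun i => f i k) with hr
  have hron : Orthonormal ℝ r := by
    rw [orthonormal_iff_ite]
    intro j k
    rw [euclid_inner]
    exact hrow j k
  set W : Submodule ℝ (EuclideanSpace ℝ (Fin (n+1))) := Submodule.span ℝ (Set.range r) with hW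
  have hfr : Module.finrank ℝ W = n := by
    rw [hW, finrank_span_eq_card hron.linearIndependent, Fintype.card_fin]
  have hfro : Module.finrank ℝ Wᗮ = 1 := by
    have := Submodule.finrank_add_finrank_orthogonal W
    rw [hfr, finrank_euclideanSpace_fin] at this
    omega
  have : Nontrivial Wᗮ := by
    rw [← Module.finrank_pos_iff (R := ℝ), hfro]
    norm_num
  obtain ⟨w, hw⟩ := exists_ne (0 : Wᗮ)
  have hwne : (w : EuclideanSpace ℝ (Fin (n+1))) ≠ 0 := by
    simpa [Submodule.coe_eq_zero] using hw
  set u : EuclideanSpace ℝ (Fin (n+1)) := ‖(w : EuclideanSpace ℝ (Fin (n+1)))‖⁻¹ • (w : _) with hu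
  have hun : ‖u‖ = 1 := by
    rw [hu, norm_smul, norm_inv, norm_norm, inv_mul_cancel₀ (norm_ne_zero_iff.2 hwne)]
  refine ⟨fun i => u i, ?_, ?_⟩
  · intro k
    have hmem : r k ∈ W := Submodule.subset_span ⟨k, rfl⟩
    have ho : ⟪r k, u⟫ = 0 := by
      rw [hu, real_inner_smul_right]
      have : ⟪r k, (w : EuclideanSpace ℝ (Fin (n+1)))⟫ = 0 :=
        (Submodule.mem_orthogonal W w.1).1 w.2 _ hmem
      rw [this, mul_zero]
    rw [euclid_inner] at ho
    exact ho
  · have h2 : ⟪u, u⟫ = 1 := by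
      rw [real_inner_self_eq_norm_mul_norm, hun, one_mul]
    rw [euclid_inner] at h2
    exact h2

/-- Rows of the snoc-matrix are orthonormal. -/
private lemma snoc_mul_transpose (g : Fin (n+1) → ℝ)
    (hrow : ∀ j k : Fin n, ∑ i, f i j * f i k = if j = k then 1 else 0)
    (hgo : ∀ k, ∑ i, f i k * g i = 0) (hgu : ∑ i, g i * g i = 1) :
    (Matrix.of fun j i => snocFamily f g i j) * (Matrix.of fun j i => snocFamily f g i j)ᵀ = 1 := by
  ext j k
  simp only [Matrix.mul_apply, Matrix.transpose_apply, Matrix.of_apply, Matrix.one_apply]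
  unfold snocFamily
  induction j using Fin.lastCases with
  | last =>
    induction k using Fin.lastCases with
    | last => simpa using hgu
    | cast k =>
      simp only [Fin.snoc_last, Fin.snoc_castSucc, if_neg (Fin.castSucc_lt_last k).ne']
      rw [← hgo k]
      exact Finset.sum_congr rfl fun i _ => mul_comm _ _
  | cast j =>
    induction k using Fin.lastCases with
    | last =>
      simp only [Fin.snoc_last, Fin.snoc_castSucc, if_neg (Fin.castSucc_lt_last j).ne]
      exact hgo j
    | cast k =>
      simp only [Fin.snoc_castSucc, Fin.castSucc_inj]
      exact hrow j k

/-- From row-orthonormality, the columns form an orthonormal basis. -/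
private lemma mkONB (g : Fin (n+1) → ℝ)
    (h : (Matrix.of fun j i => snocFamily f g i j) * (Matrix.of fun j i => snocFamily f g i j)ᵀ = 1) :
    IsONBFamily (snocFamily f g) := by
  have h2 : (Matrix.of fun j i => snocFamily f g i j)ᵀ * (Matrix.of fun j i => snocFamily f g i j) = 1 :=
    mul_eq_one_comm.2 h
  have hon : Orthonormal ℝ (snocFamily f g) := by
    rw [orthonormal_iff_ite]
    intro i i'
    have := congrFun (congrFun h2 i) i'
    simp only [Matrix.mul_apply, Matrix.transpose_apply, Matrix.of_apply, Matrix.one_apply] at this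
    rw [show (inner ℝ (snocFamily f g i) (snocFamily f g i') : ℝ)
        = ∑ j, snocFamily f g i j * snocFamily f g i' j from euclid_inner _ _]
    exact this
  have hcard : Fintype.card (Fin (n+1)) = Module.finrank ℝ (EuclideanSpace ℝ (Fin (n+1))) := by
    simp [finrank_euclideanSpace_fin]
  let b := basisOfLinearIndependentOfCardEqFinrank hon.linearIndependent hcard
  have hb : ⇑b = snocFamily f g := coe_basisOfLinearIndependentOfCardEqFinrank _ _
  refine ⟨b.toOrthonormalBasis (by rwa [hb]), fun i => ?_⟩
  rw [Module.Basis.coe_toOrthonormalBasis, hb]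

/-- From an ONB family, row-orthonormality of the matrix. -/
private lemma onb_extract (g : Fin (n+1) → ℝ) (h : IsONBFamily (snocFamily f g)) :
    (Matrix.of fun j i => snocFamily f g i j) * (Matrix.of fun j i => snocFamily f g i j)ᵀ = 1 := by
  obtain ⟨b, hb⟩ := h
  have hon : Orthonormal ℝ (snocFamily f g) := by
    have : snocFamily f g = ⇑b := funext fun i => (hb i).symm
    rw [this]; exact b.orthonormal
  rw [← mul_eq_one_comm]
  ext i i'
  simp only [Matrix.mul_apply, Matrix.transpose_apply, Matrix.of_apply, Matrix.one_apply]
  have := orthonormal_iff_ite.1 hon i i'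
  rw [show (inner ℝ (snocFamily f g i) (snocFamily f g i') : ℝ)
      = ∑ j, snocFamily f g i j * snocFamily f g i' j from euclid_inner _ _] at this
  exact this

/-- Negating the scalars negates the determinant. -/
private lemma det_neg_row (g : Fin (n+1) → ℝ) :
    (Matrix.of fun j i => snocFamily f (fun i => -g i) i j).det
      = -(Matrix.of fun j i => snocFamily f g i j).det := by
  have hM : (Matrix.of fun j i => snocFamily f (fun i => -g i) i j)
      = (Matrix.of fun j i => snocFamily f g i j).updateRow (Fin.last n)
          ((-1 : ℝ) • fun i => snocFamily f g i (Fin.last n)) := by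
    ext j i
    induction j using Fin.lastCases with
    | last => simp [snocFamily, Matrix.updateRow_self]
    | cast j => simp [snocFamily, Matrix.updateRow_ne (Fin.castSucc_lt_last j).ne]
  rw [hM, Matrix.det_updateRow_smul]
  have : (Matrix.of fun j i => snocFamily f g i j).updateRow (Fin.last n)
      (fun i => snocFamily f g i (Fin.last n)) = Matrix.of fun j i => snocFamily f g i j := by
    conv_rhs => rw [← Matrix.updateRow_eq_self (Matrix.of fun j i => snocFamily f g i j) (Fin.last n)]
    rfl
  rw [this]; ring

/-- Uniqueness core: any other orthogonal-unit scalar family is `±g`. -/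
private lemma unique_core (g g' : Fin (n+1) → ℝ)
    (hMM : (Matrix.of fun j i => snocFamily f g i j) * (Matrix.of fun j i => snocFamily f g i j)ᵀ = 1)
    (hgo' : ∀ k, ∑ i, f i k * g' i = 0) (hgu' : ∑ i, g' i * g' i = 1) :
    g' = g ∨ g' = fun i => -g i := by
  classical
  set M := (Matrix.of fun j i => snocFamily f g i j) with hMdef
  have hMtM : Mᵀ * M = 1 := mul_eq_one_comm.2 hMM
  set c : ℝ := ∑ i, g i * g' i with hc
  have h2 : M *ᵥ g' = fun j => if j = Fin.last n then c else 0 := by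
    funext j
    induction j using Fin.lastCases with
    | last =>
      simp only [Matrix.mulVec, dotProduct, hMdef, Matrix.of_apply, snocFamily,
        Fin.snoc_last, if_pos rfl]
      exact hc.symm
    | cast k =>
      simp only [Matrix.mulVec, dotProduct, hMdef, Matrix.of_apply, snocFamily,
        Fin.snoc_castSucc, if_neg (Fin.castSucc_lt_last k).ne]
      exact hgo' k
  have h3 : g' = fun i => c * g i := by
    funext i
    calc g' i = (Mᵀ *ᵥ (M *ᵥ g')) i := by
          rw [Matrix.mulVec_mulVec, hMtM, Matrix.one_mulVec]
      _ = ∑ j, M j i * (M *ᵥ g') j := by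
          simp [Matrix.mulVec, dotProduct, Matrix.transpose_apply]
      _ = c * g i := by
          rw [h2]
          simp only [mul_ite, mul_zero, Finset.sum_ite_eq', Finset.mem_univ, if_true]
          rw [hMdef]
          simp [snocFamily, mul_comm]
  have hgu : ∑ i, g i * g i = 1 := by
    have := congrFun (congrFun hMM (Fin.last n)) (Fin.last n)
    simpa [hMdef, Matrix.mul_apply, snocFamily] using this
  have hc2 : c * c = 1 := by
    have : ∑ i, g' i * g' i = c * c * ∑ i, g i * g i := by
      rw [h3]; rw [Finset.mul_sum]; exact Finset.sum_congr rfl fun i _ => by ring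
    rw [hgu', hgu, mul_one] at this
    exact this.symm
  rcases mul_self_eq_one_iff.1 hc2 with h | h
  · left; rw [h3, h]; funext i; simp
  · right; rw [h3, h]; funext i; simp

/-- Extract the orthogonality and unit conditions from row-orthonormality. -/
private lemma props_of_mul (g : Fin (n+1) → ℝ)
    (hMM : (Matrix.of fun j i => snocFamily f g i j) * (Matrix.of fun j i => snocFamily f g i j)ᵀ = 1) :
    (∀ k, ∑ i, f i k * g i = 0) ∧ ∑ i, g i * g i = 1 := by
  constructor
  · intro k
    have := congrFun (congrFun hMM (Fin.castSucc k)) (Fin.last n)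
    simpa [Matrix.mul_apply, snocFamily, Matrix.one_apply,
      (Fin.castSucc_lt_last k).ne] using this
  · have := congrFun (congrFun hMM (Fin.last n)) (Fin.last n)
    simpa [Matrix.mul_apply, snocFamily] using this

end Aux

/-- a Parseval frame `(f i)` of `n+1` vectors for `ℝⁿ` admits a unique
sequence of scalars `(g i)` such that `(f i ⊕ g i)` is an orthonormal basis of
`ℝⁿ ⊕ ℝ = ℝ^(n+1)` whose column matrix has determinant `1`; moreover the only other
scalar sequence making `(f i ⊕ g i)` an orthonormal basis is `(-g i)`. -/
theorem parseval_frame_codim_one_dilation {n : ℕ}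
    (f : Fin (n + 1) → EuclideanSpace ℝ (Fin n))
    (hf : ∀ x : EuclideanSpace ℝ (Fin n), ∑ i, ⟪f i, x⟫ • f i = x) :
    ∃ g : Fin (n + 1) → ℝ,
      (IsONBFamily (snocFamily f g) ∧
        Matrix.det (Matrix.of fun j i => snocFamily f g i j) = 1) ∧
      (∀ g' : Fin (n + 1) → ℝ,
        (IsONBFamily (snocFamily f g') ∧
          Matrix.det (Matrix.of fun j i => snocFamily f g' i j) = 1) → g' = g) ∧
      (∀ g' : Fin (n + 1) → ℝ,
        IsONBFamily (snocFamily f g') → g' = g ∨ g' = fun i => -g i) := by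
  classical
  have hrow := parseval_rows f hf
  obtain ⟨g0, hg0o, hg0u⟩ := exists_unit_orth f hrow
  -- the matrix for g0 has determinant ±1
  have hMM0 := snoc_mul_transpose f g0 hrow hg0o hg0u
  have hdet0 : (Matrix.of fun j i => snocFamily f g0 i j).det = 1 ∨
      (Matrix.of fun j i => snocFamily f g0 i j).det = -1 := by
    have := congrArg Matrix.det hMM0
    rw [Matrix.det_mul, Matrix.det_transpose, Matrix.det_one] at this
    exact mul_self_eq_one_iff.1 this
  -- choose the sign with determinant 1
  obtain ⟨g, hgo, hgu, hdet⟩ :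
      ∃ g : Fin (n+1) → ℝ, (∀ k, ∑ i, f i k * g i = 0) ∧ (∑ i, g i * g i = 1) ∧
        (Matrix.of fun j i => snocFamily f g i j).det = 1 := by
    rcases hdet0 with h | h
    · exact ⟨g0, hg0o, hg0u, h⟩
    · refine ⟨fun i => -g0 i, ?_, ?_, ?_⟩
      · intro k
        rw [← neg_eq_zero, ← hg0o k, ← Finset.sum_neg_distrib]
        exact Finset.sum_congr rfl fun i _ => by ring
      · rw [← hg0u]
        exact Finset.sum_congr rfl fun i _ => by ring
      · rw [det_neg_row, h]; ring
  have hMM := snoc_mul_transpose f g hrow hgo hgu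
  refine ⟨g, ⟨mkONB f g hMM, hdet⟩, ?_, ?_⟩
  · rintro g' ⟨honb', hdet'⟩
    obtain ⟨hgo', hgu'⟩ := props_of_mul f g' (onb_extract f g' honb')
    rcases unique_core f g g' hMM hgo' hgu' with h | h
    · exact h
    · exfalso
      rw [h, det_neg_row, hdet] at hdet'
      norm_num at hdet'
  · intro g' honb'
    obtain ⟨hgo', hgu'⟩ := props_of_mul f g' (onb_extract f g' honb')
    exact unique_core f g g' hMM hgo' hgu'
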